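/- The set X³₁ = { Σ_{n=1}^∞ δₙ ∏_{j=1}^n ξⱼ : (δₙ) ∈ W^A_θ, first nonzero digit = 1 }, where ξ₁ = α and ξ_{j+1} = ξⱼ if δⱼ = 0 and ξ_{j+1} = conj(ξⱼ) if δⱼ ≠ 0, satisfies X³₁ = ψ₁(X³₁) ∪ ψ₂(X³₁) for ψ₁(z) = αz and ψ₂(z) = α e^{iθ}·z̄ + α. -/

import Mathlib

open Complex

/-- e^{iθ} -/
noncomputable def rot (θ : ℝ) : ℂ := Complex.exp (θ * Complex.I)

/-- The digit set Δ_θ = {0, 1, e^{iθ}, …, e^{(p-1)iθ}}. -/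
def Delta (θ : ℝ) (p : ℕ) : Set ℂ := insert 0 {z | ∃ k, k < p ∧ z = rot θ ^ k}

open scoped Classical in
/-- N_j : the number of nonzero digits among positions 1,…,j. -/
noncomputable def Ncount (δ : ℕ → ℂ) (j : ℕ) : ℕ :=
  ((Finset.Icc 1 j).filter (fun m => δ m ≠ 0)).card

/-- Alternating Condition: each nonzero digit equals e^{+iθ} times the previous nonzero
digit δ_{j₀} if the count N_{j₀} of nonzero digits up to j₀ is odd, and e^{-iθ} times it
if N_{j₀} is even. Sequences are indexed from 1; index 0 is a dummy (digit 0). -/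
def AC (θ : ℝ) (δ : ℕ → ℂ) : Prop :=
  ∀ j k : ℕ, j < k → δ j ≠ 0 → δ k ≠ 0 → (∀ m, j < m → m < k → δ m = 0) →
    δ k = (if Odd (Ncount δ j) then rot θ else (rot θ)⁻¹) * δ j

/-- Membership in W^A_θ (with the convention δ 0 = 0, i.e. sequences start at index 1). -/
def Walt (θ : ℝ) (p : ℕ) (δ : ℕ → ℂ) : Prop :=
  δ 0 = 0 ∧ (∀ n, δ n ∈ Delta θ p) ∧ AC θ δ

/-- The first nonzero digit of δ is c (or δ is identically zero). -/
def FirstNonzero (δ : ℕ → ℂ) (c : ℂ) : Prop :=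
  (∀ n, δ n = 0) ∨ ∃ j, δ j = c ∧ ∀ m, m < j → δ m = 0

/-- The weights ξ: ξ₁ = α and ξ_{j+1} = ξ_j if δ_j = 0, conj ξ_j otherwise. -/
noncomputable def xi (α : ℂ) (δ : ℕ → ℂ) : ℕ → ℂ
  | 0 => α
  | j + 1 => if δ j = 0 then xi α δ j else starRingEnd ℂ (xi α δ j)

/-- X³₁ : points from alternating sequences with first nonzero digit 1. -/
noncomputable def X3one (α : ℂ) (θ : ℝ) (p : ℕ) : Set ℂ :=
  {x | ∃ δ : ℕ → ℂ, Walt θ p δ ∧ FirstNonzero δ 1 ∧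
    x = ∑' n, δ n * ∏ j ∈ Finset.Icc 1 n, xi α δ j}

/-- X³_{α,θ} : points from all alternating sequences. -/
noncomputable def X3full (α : ℂ) (θ : ℝ) (p : ℕ) : Set ℂ :=
  {x | ∃ δ : ℕ → ℂ, Walt θ p δ ∧
    x = ∑' n, δ n * ∏ j ∈ Finset.Icc 1 n, xi α δ j}

lemma norm_rot (θ : ℝ) : ‖rot θ‖ = 1 := by
  simp [rot, Complex.norm_exp]

lemma rot_ne_zero (θ : ℝ) : rot θ ≠ 0 := Complex.exp_ne_zero _

lemma conj_rot (θ : ℝ) : star (rot θ) = (rot θ)⁻¹ := by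
  rw [rot, ← Complex.exp_neg]
  rw [show star (Complex.exp ((θ:ℂ) * Complex.I)) = starRingEnd ℂ (Complex.exp ((θ:ℂ) * Complex.I)) from rfl,
    ← Complex.exp_conj]
  congr 1
  simp [map_mul, Complex.conj_I]

lemma rot_mul_conj (θ : ℝ) : rot θ * star (rot θ) = 1 := by
  rw [conj_rot]; exact mul_inv_cancel₀ (rot_ne_zero θ)

lemma rot_pow_p (θ : ℝ) (p : ℕ) (q : ℤ) (hp : 0 < p)
    (hθ : θ = 2 * Real.pi * (q : ℝ) / (p : ℝ)) : rot θ ^ p = 1 := by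
  rw [rot, ← Complex.exp_nat_mul]
  have hpne : (p : ℂ) ≠ 0 := by
    exact_mod_cast hp.ne'
  have hprop : ((p:ℂ)) * ((θ:ℂ) * Complex.I) = (q : ℂ) * (2 * Real.pi * Complex.I) := by
    rw [hθ]; push_cast; field_simp
  rw [hprop, Complex.exp_int_mul_two_pi_mul_I]

lemma Delta.norm_le_one {θ : ℝ} {p : ℕ} {z : ℂ} (h : z ∈ Delta θ p) : ‖z‖ ≤ 1 := by
  rcases h with h | ⟨k, _, rfl⟩
  · simp [h]
  · rw [norm_pow, norm_rot, one_pow]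

lemma rot_closed {θ : ℝ} {p : ℕ} (q : ℤ) (hp : 0 < p)
    (hθ : θ = 2 * Real.pi * (q : ℝ) / (p : ℝ)) {z : ℂ} (h : z ∈ Delta θ p) :
    rot θ * star z ∈ Delta θ p := by
  rcases h with h | ⟨k, hk, rfl⟩
  · left; simp [h]
  · right
    refine ⟨(1 + p - k) % p, Nat.mod_lt _ hp, ?_⟩
    have hstar : star (rot θ ^ k) = (rot θ)⁻¹ ^ k := by
      rw [star_pow, conj_rot]
    have h1 : rot θ ^ ((1 + p - k) % p) = rot θ ^ (1 + p - k) := by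
      conv_rhs => rw [← Nat.mod_add_div (1 + p - k) p]
      rw [pow_add, pow_mul, rot_pow_p θ p q hp hθ, one_pow, mul_one]
    rw [h1, hstar]
    have hk' : k ≤ 1 + p := by omega
    have : rot θ ^ (1 + p - k) * rot θ ^ k = rot θ ^ (1 + p) := by
      rw [← pow_add]; congr 1; omega
    have hrk : rot θ ^ k ≠ 0 := pow_ne_zero _ (rot_ne_zero θ)
    rw [inv_pow, ← div_eq_mul_inv, div_eq_iff hrk, this, pow_add, rot_pow_p θ p q hp hθ, pow_one, mul_one]

lemma norm_xi (α : ℂ) (δ : ℕ → ℂ) (j : ℕ) : ‖xi α δ j‖ = ‖α‖ := by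
  induction j with
  | zero => rfl
  | succ j ih => rw [xi]; split <;> simp [ih]

lemma summable_trm {α : ℂ} {θ : ℝ} {p : ℕ} {δ : ℕ → ℂ} (hα : ‖α‖ < 1)
    (hΔ : ∀ n, δ n ∈ Delta θ p) :
    Summable (fun n => δ n * ∏ j ∈ Finset.Icc 1 n, xi α δ j) := by
  apply Summable.of_norm_bounded (g := fun n : ℕ => ‖α‖ ^ n)
    (summable_geometric_of_lt_one (norm_nonneg α) hα)
  intro n
  rw [norm_mul, norm_prod]
  calc ‖δ n‖ * ∏ j ∈ Finset.Icc 1 n, ‖xi α δ j‖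
      ≤ 1 * ∏ j ∈ Finset.Icc 1 n, ‖α‖ := by
        apply mul_le_mul (Delta.norm_le_one (hΔ n)) ?_ ?_ zero_le_one
        · refine le_of_eq (Finset.prod_congr rfl fun j _ => norm_xi α δ j)
        · positivity
    _ = ‖α‖ ^ n := by rw [one_mul, Finset.prod_const, Nat.card_Icc]; norm_num

lemma Ncount_succ (δ : ℕ → ℂ) (j : ℕ) :
    Ncount δ (j + 1) = Ncount δ j + if δ (j+1) ≠ 0 then 1 else 0 := by
  rw [Ncount, Ncount]
  have h : Finset.Icc 1 (j+1) = insert (j+1) (Finset.Icc 1 j) := by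
    ext m; simp [Finset.mem_Icc]; omega
  rw [h, Finset.filter_insert]
  split
  · rw [Finset.card_insert_of_notMem (by simp)]
  · simp_all

lemma Ncount_zero (δ : ℕ → ℂ) : Ncount δ 0 = 0 := by simp [Ncount]

-- Pair A lemmas : δ' n = δ (n+1), with δ 0 = 0, δ 1 = 0.
lemma xiA (α : ℂ) (δ : ℕ → ℂ) (h0 : δ 0 = 0) (j : ℕ) :
    xi α (fun n => δ (n+1)) j = xi α δ (j+1) := by
  induction j with
  | zero => simp [xi, h0]
  | succ j ih => rw [xi, xi, ih]

lemma prodA (α : ℂ) (δ : ℕ → ℂ) (h0 : δ 0 = 0) (n : ℕ) :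
    ∏ j ∈ Finset.Icc 1 (n+1), xi α δ j
      = α * ∏ j ∈ Finset.Icc 1 n, xi α (fun m => δ (m+1)) j := by
  induction n with
  | zero => simp [xi, h0]
  | succ n ih =>
    rw [Finset.prod_Icc_succ_top (by omega), ih, Finset.prod_Icc_succ_top (by omega),
      xiA α δ h0]
    ring

lemma NcountA (δ : ℕ → ℂ) (h1 : δ 1 = 0) (j : ℕ) :
    Ncount (fun n => δ (n+1)) j = Ncount δ (j+1) := by
  induction j with
  | zero =>
    rw [Ncount_zero, Ncount]
    rw [show Finset.Icc 1 1 = {1} from rfl, Finset.filter_singleton]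
    simp [h1]
  | succ j ih => rw [Ncount_succ, Ncount_succ, ih]

lemma ACA (θ : ℝ) (δ : ℕ → ℂ) (h1 : δ 1 = 0) (h : AC θ δ) : AC θ (fun n => δ (n+1)) := by
  intro j k hjk hj hk hgap
  simp only at hj hk hgap ⊢
  have := h (j+1) (k+1) (by omega) hj hk (fun m hm1 hm2 => by
    have := hgap (m-1) (by omega) (by omega)
    simpa [show m - 1 + 1 = m by omega] using this)
  rw [NcountA δ h1]
  exact this

lemma ACA' (θ : ℝ) (δ : ℕ → ℂ) (h0 : δ 0 = 0) (h1 : δ 1 = 0)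
    (h : AC θ (fun n => δ (n+1))) : AC θ δ := by
  intro j k hjk hj hk hgap
  have hj2 : 2 ≤ j := by
    rcases Nat.lt_or_ge j 2 with h' | h'
    · interval_cases j <;> simp_all
    · exact h'
  have := h (j-1) (k-1) (by omega)
    (by simpa [show j-1+1 = j by omega] using hj)
    (by simpa [show k-1+1 = k by omega] using hk)
    (fun m hm1 hm2 => by
      simp only
      exact hgap (m+1) (by omega) (by omega))
  simp only at this
  rw [NcountA δ h1, show j-1+1 = j by omega, show k-1+1 = k by omega] at this
  exact this

lemma WaltA {θ : ℝ} {p : ℕ} {δ : ℕ → ℂ} (hW : Walt θ p δ) (h1 : δ 1 = 0) :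
    Walt θ p (fun n => δ (n+1)) :=
  ⟨h1, fun n => hW.2.1 (n+1), ACA θ δ h1 hW.2.2⟩

lemma FNA {δ : ℕ → ℂ} (h0 : δ 0 = 0) (h1 : δ 1 = 0) (hF : FirstNonzero δ 1) :
    FirstNonzero (fun n => δ (n+1)) 1 := by
  rcases hF with hz | ⟨j, hj1, hjz⟩
  · exact Or.inl fun n => hz _
  · have hj2 : 2 ≤ j := by
      rcases Nat.lt_or_ge j 2 with h' | h'
      · interval_cases j <;> simp_all
      · exact h'
    exact Or.inr ⟨j - 1, by simpa [show j-1+1 = j by omega] using hj1,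
      fun m hm => hjz (m+1) (by omega)⟩

lemma sumA (α : ℂ) {θ : ℝ} {p : ℕ} (hα : ‖α‖ < 1) {δ : ℕ → ℂ}
    (h0 : δ 0 = 0) (h1 : δ 1 = 0) (hΔ : ∀ n, δ n ∈ Delta θ p) :
    ∑' n, δ n * ∏ j ∈ Finset.Icc 1 n, xi α δ j
      = α * ∑' n, δ (n+1) * ∏ j ∈ Finset.Icc 1 n, xi α (fun m => δ (m+1)) j := by
  rw [Summable.tsum_eq_zero_add (summable_trm hα hΔ)]
  rw [show δ 0 * ∏ j ∈ Finset.Icc 1 0, xi α δ j = 0 by simp [h0], zero_add,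
    ← tsum_mul_left]
  apply tsum_congr
  intro n
  rw [prodA α δ h0 n]; ring

/-- The ψ₂-shift of a digit sequence. -/
noncomputable def dB (θ : ℝ) (δ : ℕ → ℂ) (m : ℕ) : ℂ :=
  if m = 0 then 0 else rot θ * starRingEnd ℂ (δ (m+1))

/-- The inverse ψ₂-shift. -/
noncomputable def dB' (θ : ℝ) (δ' : ℕ → ℂ) (m : ℕ) : ℂ :=
  if m = 0 then 0 else if m = 1 then 1 else rot θ * starRingEnd ℂ (δ' (m-1))

lemma dB_dB' (θ : ℝ) (δ' : ℕ → ℂ) (h0 : δ' 0 = 0) : dB θ (dB' θ δ') = δ' := by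
  funext m
  rcases Nat.eq_zero_or_pos m with rfl | hm
  · simp [dB, h0]
  · have hm1 : m ≠ 0 := by omega
    simp only [dB, dB', if_neg hm1, if_neg (by omega : m + 1 ≠ 0), if_neg (by omega : m + 1 ≠ 1)]
    rw [show m + 1 - 1 = m from rfl, map_mul, ← mul_assoc]
    rw [show (starRingEnd ℂ) (rot θ) = star (rot θ) from rfl, rot_mul_conj]
    simp

lemma dB_zero_iff (θ : ℝ) (δ : ℕ → ℂ) (m : ℕ) (hm : 1 ≤ m) :
    (dB θ δ m = 0 ↔ δ (m+1) = 0) := by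
  rw [dB, if_neg (by omega : m ≠ 0)]
  constructor
  · intro h
    rcases mul_eq_zero.mp h with h | h
    · exact absurd h (rot_ne_zero θ)
    · simpa using h
  · intro h; simp [h]

lemma xiB (α : ℂ) (θ : ℝ) (δ : ℕ → ℂ) (h0 : δ 0 = 0) (h1 : δ 1 ≠ 0) :
    ∀ j, 1 ≤ j → xi α (dB θ δ) j = starRingEnd ℂ (xi α δ (j+1)) := by
  intro j hj
  induction j with
  | zero => omega
  | succ j ih =>
    rcases Nat.eq_zero_or_pos j with rfl | hj1
    · show (if dB θ δ 0 = 0 then _ else _) = _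
      rw [if_pos (by simp [dB])]
      show α = starRingEnd ℂ (if δ 1 = 0 then xi α δ 1 else starRingEnd ℂ (xi α δ 1))
      rw [if_neg h1, RingHomInvPair.comp_apply_eq]
      show α = if δ 0 = 0 then α else _
      rw [if_pos h0]
    · have ihj := ih hj1
      show (if dB θ δ j = 0 then xi α (dB θ δ) j else starRingEnd ℂ (xi α (dB θ δ) j)) = _
      rw [show j + 1 + 1 = (j+1) + 1 from rfl]
      show _ = starRingEnd ℂ (if δ (j+1) = 0 then xi α δ (j+1) else starRingEnd ℂ (xi α δ (j+1)))
      by_cases hz : δ (j+1) = 0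
      · rw [if_pos ((dB_zero_iff θ δ j hj1).mpr hz), if_pos hz, ihj]
      · rw [if_neg (fun c => hz ((dB_zero_iff θ δ j hj1).mp c)), if_neg hz, ihj]

lemma NcountB (θ : ℝ) (δ : ℕ → ℂ) (h1 : δ 1 ≠ 0) (j : ℕ) :
    Ncount δ (j+1) = Ncount (dB θ δ) j + 1 := by
  induction j with
  | zero =>
    rw [Ncount_zero, Ncount]
    rw [show Finset.Icc 1 1 = {1} from rfl, Finset.filter_singleton]
    simp [h1]
  | succ j ih =>
    rw [Ncount_succ δ (j+1), ih, Ncount_succ (dB θ δ) j]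
    by_cases hz : δ (j+1+1) = 0
    · have hz' : dB θ δ (j+1) = 0 := (dB_zero_iff θ δ (j+1) (by omega)).mpr hz
      simp [hz, hz']
    · have hz' : dB θ δ (j+1) ≠ 0 := fun c => hz ((dB_zero_iff θ δ (j+1) (by omega)).mp c)
      simp [hz, hz']

lemma rot_mul_conj' (θ : ℝ) : rot θ * starRingEnd ℂ (rot θ) = 1 := rot_mul_conj θ

lemma conj_rot' (θ : ℝ) : starRingEnd ℂ (rot θ) = (rot θ)⁻¹ := conj_rot θ

lemma conj_rot_inv (θ : ℝ) : starRingEnd ℂ ((rot θ)⁻¹) = rot θ := by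
  rw [map_inv₀, conj_rot', inv_inv]

lemma ACB (θ : ℝ) (δ : ℕ → ℂ) (h1 : δ 1 ≠ 0) (h : AC θ δ) : AC θ (dB θ δ) := by
  intro j k hjk hj hk hgap
  have hj1 : 1 ≤ j := by
    by_contra hc
    exact hj (by simp [dB, show j = 0 by omega])
  have hk1 : 1 ≤ k := by omega
  have hjz : δ (j+1) ≠ 0 := fun c => hj ((dB_zero_iff θ δ j hj1).mpr c)
  have hkz : δ (k+1) ≠ 0 := fun c => hk ((dB_zero_iff θ δ k hk1).mpr c)
  have hmain := h (j+1) (k+1) (by omega) hjz hkz (fun m hm1 hm2 => by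
    have hg := hgap (m-1) (by omega) (by omega)
    have hmge : 1 ≤ m - 1 := by omega
    have := (dB_zero_iff θ δ (m-1) hmge).mp hg
    rwa [show m - 1 + 1 = m by omega] at this)
  have hpar : Odd (Ncount δ (j+1)) ↔ ¬ Odd (Ncount (dB θ δ) j) := by
    rw [NcountB θ δ h1 j, Nat.odd_add_one, Nat.not_odd_iff_even]
  rw [show dB θ δ k = rot θ * starRingEnd ℂ (δ (k+1)) by rw [dB, if_neg (by omega)],
      show dB θ δ j = rot θ * starRingEnd ℂ (δ (j+1)) by rw [dB, if_neg (by omega)],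
      hmain]
  by_cases hN : Odd (Ncount (dB θ δ) j)
  · rw [if_pos hN, if_neg (fun c => (hpar.mp c) hN), map_mul, conj_rot_inv]
  · rw [if_neg hN, if_pos (hpar.mpr hN), map_mul, conj_rot']
    ring

lemma ACB' (θ : ℝ) (δ' : ℕ → ℂ) (h0 : δ' 0 = 0) (hF : FirstNonzero δ' 1)
    (h : AC θ δ') : AC θ (dB' θ δ') := by
  set δ := dB' θ δ' with hδ
  have hδ0 : δ 0 = 0 := by simp [hδ, dB']
  have hδ1 : δ 1 = 1 := by simp [hδ, dB']
  have hval : ∀ m, 2 ≤ m → δ m = rot θ * starRingEnd ℂ (δ' (m-1)) := by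
    intro m hm
    rw [hδ]
    show dB' θ δ' m = _
    rw [dB', if_neg (by omega : ¬ m = 0), if_neg (by omega : ¬ m = 1)]
  have hzero : ∀ m, 2 ≤ m → (δ m = 0 ↔ δ' (m-1) = 0) := by
    intro m hm
    rw [hval m hm]
    constructor
    · intro hc
      rcases mul_eq_zero.mp hc with hc | hc
      · exact absurd hc (rot_ne_zero θ)
      · simpa using hc
    · intro hc; simp [hc]
  have hNrel : ∀ j, Ncount δ (j+1) = Ncount δ' j + 1 := by
    intro j
    have := NcountB θ δ (by rw [hδ1]; exact one_ne_zero) j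
    rwa [hδ, dB_dB' θ δ' h0] at this
  intro j k hjk hj hk hgap
  have hj1 : 1 ≤ j := by
    by_contra hc
    exact hj (by rw [show j = 0 by omega, hδ0])
  have hk2 : 2 ≤ k := by omega
  have hkz : δ' (k-1) ≠ 0 := fun c => hk ((hzero k hk2).mpr c)
  rcases Nat.eq_or_lt_of_le hj1 with hj1' | hj2
  · -- j = 1
    have hNj : Ncount δ 1 = 1 := by
      have h' := hNrel 0
      rw [Ncount_zero] at h'
      exact h'
    -- δ' (k-1) is the first nonzero digit of δ', hence equals 1
    have hfirst : δ' (k-1) = 1 := by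
      rcases hF with hz | ⟨j₀, hj₀1, hj₀z⟩
      · exact absurd (hz (k-1)) hkz
      · have hj₀pos : 1 ≤ j₀ := by
          by_contra hc
          rw [show j₀ = 0 by omega, h0] at hj₀1
          exact one_ne_zero hj₀1.symm
        have hj₀ : j₀ = k - 1 := by
          by_contra hne
          rcases Nat.lt_or_ge j₀ (k-1) with hlt | hge
          · -- δ' j₀ = 0 by gap since 2 ≤ j₀+1 < k
            have := hgap (j₀+1) (by omega) (by omega)
            have := (hzero (j₀+1) (by omega)).mp this
            rw [show j₀ + 1 - 1 = j₀ from rfl] at this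
            rw [hj₀1] at this
            exact one_ne_zero this
          · exact hkz (hj₀z (k-1) (by omega))
        rw [← hj₀]; exact hj₀1
    rw [← hj1', hNj, hδ1, hval k hk2, hfirst]
    simp
  · -- 2 ≤ j
    have hjz : δ' (j-1) ≠ 0 := fun c => hj ((hzero j hj2).mpr c)
    have hmain := h (j-1) (k-1) (by omega) hjz hkz (fun m hm1 hm2 => by
      have := hgap (m+1) (by omega) (by omega)
      have := (hzero (m+1) (by omega)).mp this
      rwa [show m + 1 - 1 = m from rfl] at this)
    have hpar : Odd (Ncount δ j) ↔ ¬ Odd (Ncount δ' (j-1)) := by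
      have := hNrel (j-1)
      rw [show j - 1 + 1 = j by omega] at this
      rw [this, Nat.odd_add_one, Nat.not_odd_iff_even]
    rw [hval k hk2, hval j hj2, hmain]
    by_cases hN : Odd (Ncount δ' (j-1))
    · rw [if_pos hN, if_neg (fun c => (hpar.mp c) hN), map_mul, conj_rot']
      ring
    · rw [if_neg hN, if_pos (hpar.mpr hN), map_mul, conj_rot_inv]

lemma one_mem_Delta {θ : ℝ} {p : ℕ} (hp : 0 < p) : (1 : ℂ) ∈ Delta θ p :=
  Or.inr ⟨0, hp, by simp⟩

lemma zero_mem_Delta {θ : ℝ} {p : ℕ} : (0 : ℂ) ∈ Delta θ p := Or.inl rfl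

lemma DeltaB {θ : ℝ} {p : ℕ} (q : ℤ) (hp : 0 < p)
    (hθ : θ = 2 * Real.pi * (q : ℝ) / (p : ℝ)) {δ : ℕ → ℂ}
    (hΔ : ∀ n, δ n ∈ Delta θ p) : ∀ n, dB θ δ n ∈ Delta θ p := by
  intro n
  rcases Nat.eq_zero_or_pos n with rfl | hn
  · rw [dB, if_pos rfl]; exact zero_mem_Delta
  · rw [dB, if_neg (by omega)]
    exact rot_closed q hp hθ (hΔ (n+1))

lemma DeltaB' {θ : ℝ} {p : ℕ} (q : ℤ) (hp : 0 < p)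
    (hθ : θ = 2 * Real.pi * (q : ℝ) / (p : ℝ)) {δ' : ℕ → ℂ}
    (hΔ : ∀ n, δ' n ∈ Delta θ p) : ∀ n, dB' θ δ' n ∈ Delta θ p := by
  intro n
  match n with
  | 0 => rw [dB', if_pos rfl]; exact zero_mem_Delta
  | 1 => rw [dB', if_neg (by omega), if_pos rfl]; exact one_mem_Delta hp
  | (m+2) =>
    rw [dB', if_neg (by omega), if_neg (by omega)]
    exact rot_closed q hp hθ (hΔ _)

lemma FNB (θ : ℝ) (δ : ℕ → ℂ) (h1 : δ 1 = 1) (hAC : AC θ δ) :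
    FirstNonzero (dB θ δ) 1 := by
  by_cases h : ∀ n, 2 ≤ n → δ n = 0
  · left
    intro n
    rcases Nat.eq_zero_or_pos n with rfl | hn
    · rw [dB, if_pos rfl]
    · rw [dB, if_neg (by omega), h (n+1) (by omega)]
      simp
  · push_neg at h
    obtain ⟨n0, hn0, hn0z⟩ := h
    have hex : ∃ n, 2 ≤ n ∧ δ n ≠ 0 := ⟨n0, hn0, hn0z⟩
    classical
    set k := Nat.find hex with hkdef
    have hk := Nat.find_spec hex
    have hmin : ∀ m, m < k → ¬(2 ≤ m ∧ δ m ≠ 0) := fun m hm => Nat.find_min hex hm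
    have hN1 : Ncount δ 1 = 1 := by
      rw [Ncount, show Finset.Icc 1 1 = {1} from rfl, Finset.filter_singleton]
      simp [h1]
    have hδk : δ k = rot θ := by
      have := hAC 1 k (by omega) (by rw [h1]; exact one_ne_zero) hk.2
        (fun m hm1 hm2 => by
          by_contra hc
          exact hmin m hm2 ⟨by omega, hc⟩)
      rw [hN1] at this
      simpa [h1] using this
    right
    refine ⟨k - 1, ?_, ?_⟩
    · rw [dB, if_neg (by omega), show k - 1 + 1 = k by omega, hδk]
      exact rot_mul_conj' θ
    · intro m hm
      rcases Nat.eq_zero_or_pos m with rfl | hm1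
      · rw [dB, if_pos rfl]
      · rw [dB, if_neg (by omega)]
        have hz : δ (m+1) = 0 := by
          by_contra hc
          exact hmin (m+1) (by omega) ⟨by omega, hc⟩
        rw [hz]
        simp

lemma trmB (α : ℂ) (θ : ℝ) {δ : ℕ → ℂ} (h0 : δ 0 = 0) (h1 : δ 1 ≠ 0)
    (m : ℕ) (hm : 1 ≤ m) :
    δ (m+1) * ∏ j ∈ Finset.Icc 1 (m+1), xi α δ j
      = α * rot θ * starRingEnd ℂ (dB θ δ m * ∏ j ∈ Finset.Icc 1 m, xi α (dB θ δ) j) := by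
  have hprod : ∏ j ∈ Finset.Icc 1 m, starRingEnd ℂ (xi α (dB θ δ) j)
      = ∏ j ∈ Finset.Icc 1 m, xi α (fun n => δ (n+1)) j := by
    refine Finset.prod_congr rfl fun j hj => ?_
    have hj1 : 1 ≤ j := (Finset.mem_Icc.mp hj).1
    rw [xiB α θ δ h0 h1 j hj1, RingHomInvPair.comp_apply_eq, ← xiA α δ h0 j]
  have e1 : starRingEnd ℂ (dB θ δ m) = starRingEnd ℂ (rot θ) * δ (m+1) := by
    rw [dB, if_neg (by omega), map_mul, RingHomInvPair.comp_apply_eq]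
  rw [map_mul, e1, map_prod, hprod, prodA α δ h0 m]
  have h2 := rot_mul_conj' θ
  linear_combination (-(α * δ (m+1) * ∏ j ∈ Finset.Icc 1 m, xi α (fun n => δ (n+1)) j)) * h2

lemma sumB (α : ℂ) {θ : ℝ} {p : ℕ} (q : ℤ) (hp : 0 < p)
    (hθ : θ = 2 * Real.pi * (q : ℝ) / (p : ℝ)) (hα : ‖α‖ < 1) {δ : ℕ → ℂ}
    (h0 : δ 0 = 0) (h1 : δ 1 = 1) (hΔ : ∀ n, δ n ∈ Delta θ p) :
    ∑' n, δ n * ∏ j ∈ Finset.Icc 1 n, xi α δ j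
      = α * rot θ * starRingEnd ℂ
          (∑' n, dB θ δ n * ∏ j ∈ Finset.Icc 1 n, xi α (dB θ δ) j) + α := by
  have h1' : δ 1 ≠ 0 := by rw [h1]; exact one_ne_zero
  have hS := summable_trm hα hΔ
  have hS' := summable_trm hα (DeltaB q hp hθ hΔ)
  have hg0 : dB θ δ 0 * ∏ j ∈ Finset.Icc 1 0, xi α (dB θ δ) j = 0 := by
    rw [dB, if_pos rfl, zero_mul]
  have e2 : (∑' n, dB θ δ n * ∏ j ∈ Finset.Icc 1 n, xi α (dB θ δ) j)
      = ∑' n, dB θ δ (n+1) * ∏ j ∈ Finset.Icc 1 (n+1), xi α (dB θ δ) j := by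
    rw [Summable.tsum_eq_zero_add hS', hg0, zero_add]
  have e3 : ∀ n : ℕ, δ (n+1+1) * ∏ j ∈ Finset.Icc 1 (n+1+1), xi α δ j
      = (α * rot θ) * starRingEnd ℂ (dB θ δ (n+1) * ∏ j ∈ Finset.Icc 1 (n+1), xi α (dB θ δ) j) :=
    fun n => trmB α θ h0 h1' (n+1) (by omega)
  have e4 : (∑' n : ℕ, starRingEnd ℂ (dB θ δ (n+1) * ∏ j ∈ Finset.Icc 1 (n+1), xi α (dB θ δ) j))
      = starRingEnd ℂ (∑' n : ℕ, dB θ δ (n+1) * ∏ j ∈ Finset.Icc 1 (n+1), xi α (dB θ δ) j) :=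
    tsum_star.symm
  have hf1 : δ 1 * ∏ j ∈ Finset.Icc 1 1, xi α δ j = α := by
    rw [h1, one_mul, show Finset.Icc 1 1 = {1} from rfl, Finset.prod_singleton]
    show (if δ 0 = 0 then xi α δ 0 else _) = α
    rw [if_pos h0]
    rfl
  rw [Summable.tsum_eq_zero_add hS, Summable.tsum_eq_zero_add ((summable_nat_add_iff 1).mpr hS)]
  rw [show δ 0 * ∏ j ∈ Finset.Icc 1 0, xi α δ j = 0 by rw [h0, zero_mul], zero_add, hf1]
  rw [tsum_congr e3, tsum_mul_left, e4, ← e2]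
  ring

/-- X³₁ = ψ₁(X³₁) ∪ ψ₂(X³₁) with ψ₁(z) = αz, ψ₂(z) = αe^{iθ}·conj z + α. -/
theorem X3one_set_equation (α : ℂ) (θ : ℝ) (p : ℕ) (q : ℤ) (hp : 0 < p)
    (hθ : θ = 2 * Real.pi * (q : ℝ) / (p : ℝ)) (hα0 : 0 < ‖α‖) (hα : ‖α‖ < 1) :
    X3one α θ p =
      (fun z => α * z) '' X3one α θ p ∪
      (fun z => α * rot θ * starRingEnd ℂ z + α) '' X3one α θ p := by
  ext x
  simp only [Set.mem_union, Set.mem_image]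
  constructor
  · rintro ⟨δ, ⟨h0, hΔ, hAC⟩, hF, rfl⟩
    by_cases h1 : δ 1 = 0
    · left
      refine ⟨∑' n, δ (n+1) * ∏ j ∈ Finset.Icc 1 n, xi α (fun m => δ (m+1)) j,
        ⟨fun m => δ (m+1), WaltA ⟨h0, hΔ, hAC⟩ h1, FNA h0 h1 hF, rfl⟩,
        (sumA α hα h0 h1 hΔ).symm⟩
    · have h1' : δ 1 = 1 := by
        rcases hF with hz | ⟨j, hj1, hjz⟩
        · exact absurd (hz 1) h1
        · have hj : j = 1 := by
            rcases Nat.lt_trichotomy j 1 with h | h | h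
            · rw [show j = 0 by omega, h0] at hj1
              exact absurd hj1.symm one_ne_zero
            · exact h
            · exact absurd (hjz 1 h) h1
          rw [← hj]; exact hj1
      right
      refine ⟨∑' n, dB θ δ n * ∏ j ∈ Finset.Icc 1 n, xi α (dB θ δ) j,
        ⟨dB θ δ, ⟨by rw [dB, if_pos rfl], DeltaB q hp hθ hΔ, ACB θ δ h1 hAC⟩,
          FNB θ δ h1' hAC, rfl⟩,
        (sumB α q hp hθ hα h0 h1' hΔ).symm⟩
  · rintro (⟨x', ⟨δ', ⟨h0', hΔ', hAC'⟩, hF', rfl⟩, rfl⟩ |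
            ⟨x', ⟨δ', ⟨h0', hΔ', hAC'⟩, hF', rfl⟩, rfl⟩)
    · -- ψ₁ backward
      set δ : ℕ → ℂ := fun n => if n = 0 then 0 else δ' (n-1) with hδdef
      have hδ0 : δ 0 = 0 := by simp [hδdef]
      have hδ1 : δ 1 = 0 := by simp [hδdef, h0']
      have hshift : (fun m => δ (m+1)) = δ' := by
        funext m; simp [hδdef]
      have hΔδ : ∀ n, δ n ∈ Delta θ p := by
        intro n
        rcases n with _ | n
        · rw [hδ0]; exact zero_mem_Delta
        · simpa [hδdef] using hΔ' n
      refine ⟨δ, ⟨hδ0, hΔδ, ACA' θ δ hδ0 hδ1 (by rw [hshift]; exact hAC')⟩, ?_, ?_⟩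
      · rcases hF' with hz | ⟨j, hj1, hjz⟩
        · left
          intro n
          rcases n with _ | n
          · exact hδ0
          · simp [hδdef, hz]
        · right
          refine ⟨j+1, by simpa [hδdef] using hj1, fun m hm => ?_⟩
          rcases m with _ | m
          · exact hδ0
          · simpa [hδdef] using hjz m (by omega)
      · have hsum := sumA α hα hδ0 hδ1 hΔδ
        have e : ∀ n : ℕ, δ (n+1) * ∏ j ∈ Finset.Icc 1 n, xi α (fun m => δ (m+1)) j
            = δ' n * ∏ j ∈ Finset.Icc 1 n, xi α δ' j := by
          intro n
          rw [show δ (n+1) = δ' n from congrFun hshift n, hshift]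
        rw [hsum, tsum_congr e]
    · -- ψ₂ backward
      have hδ0 : dB' θ δ' 0 = 0 := by rw [dB', if_pos rfl]
      have hδ1 : dB' θ δ' 1 = 1 := by rw [dB', if_neg (by omega), if_pos rfl]
      refine ⟨dB' θ δ', ⟨hδ0, DeltaB' q hp hθ hΔ', ACB' θ δ' h0' hF' hAC'⟩,
        Or.inr ⟨1, hδ1, fun m hm => by rw [show m = 0 by omega]; exact hδ0⟩, ?_⟩
      have hsum := sumB α q hp hθ hα hδ0 hδ1 (DeltaB' q hp hθ hΔ')
      rw [dB_dB' θ δ' h0'] at hsum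
      exact hsum.symm
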